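/- Let F be a real quadratic field with ring of integers O_F, different ideal 𝔡, and let p be a rational prime that splits in F as pO_F = 𝔭₁𝔭₂. Let λ ∈ 𝔡⁻¹ be totally positive with valuation v_{𝔭₁}(λ) ≥ x and v_{𝔭₂}(λ) = y, where x > y ≥ 0 are integers. Then the p-adic valuation of the trace Tr_{F/ℚ}(λ) equals y. -/

import Mathlib

open IsDedekindDomain NumberField Multiplicative

section Aux

variable {R : Type*} [CommRing R] [IsDedekindDomain R]

lemma aux_intVal_eq_ofAdd_neg (v : HeightOneSpectrum R) (r : R) (hr : r ≠ 0) (n : ℕ)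
    (h1 : v.asIdeal ^ n ∣ Ideal.span {r}) (h2 : ¬ v.asIdeal ^ (n + 1) ∣ Ideal.span {r}) :
    v.intValuation r = ((ofAdd (-(n : ℤ)) : Multiplicative ℤ) : WithZero (Multiplicative ℤ)) := by
  have hne : v.intValuationDef r ≠ 0 := v.intValuation_ne_zero r hr
  obtain ⟨a, ha⟩ : ∃ a : Multiplicative ℤ,
      (a : WithZero (Multiplicative ℤ)) = v.intValuationDef r :=
    ⟨WithZero.unzero hne, WithZero.coe_unzero hne⟩
  have h1' : v.intValuationDef r ≤ ((ofAdd (-(n : ℤ)) : Multiplicative ℤ) :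
      WithZero (Multiplicative ℤ)) := (v.intValuation_le_pow_iff_dvd r n).mpr h1
  have h2' : ¬ v.intValuationDef r ≤ ((ofAdd (-((n + 1 : ℕ) : ℤ)) : Multiplicative ℤ) :
      WithZero (Multiplicative ℤ)) := fun h => h2 ((v.intValuation_le_pow_iff_dvd r (n + 1)).mp h)
  rw [← ha, WithZero.coe_le_coe] at h1' h2'
  rw [show v.intValuation r = v.intValuationDef r from rfl, ← ha]
  rw [← ofAdd_toAdd a] at h1' h2' ⊢
  rw [Multiplicative.ofAdd_le] at h1' h2'
  rw [WithZero.coe_inj]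
  congr 1
  push_cast at h2' ⊢
  omega

end Aux

section NF

variable {F : Type*} [Field F] [NumberField F] {p : ℕ}

lemma aux_intVal_p (hp : p.Prime) (v w : HeightOneSpectrum (𝓞 F)) (hne : v ≠ w)
    (hsplit : Ideal.span {(p : 𝓞 F)} = v.asIdeal * w.asIdeal) :
    w.intValuation (p : 𝓞 F) = ((ofAdd (-1 : ℤ) : Multiplicative ℤ) :
      WithZero (Multiplicative ℤ)) := by
  have hp0 : (p : 𝓞 F) ≠ 0 := Nat.cast_ne_zero.mpr hp.ne_zero
  have h1 : w.asIdeal ^ 1 ∣ Ideal.span {(p : 𝓞 F)} := by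
    rw [pow_one, hsplit]; exact dvd_mul_left _ _
  have h2 : ¬ w.asIdeal ^ (1 + 1) ∣ Ideal.span {(p : 𝓞 F)} := by
    rw [hsplit]
    intro hdvd
    have h2' : w.asIdeal * w.asIdeal ∣ v.asIdeal * w.asIdeal := by
      rwa [← pow_two, ← (by ring : 1 + 1 = 2)]
    have hw0 : w.asIdeal ≠ 0 := w.ne_bot
    have hdvd' : w.asIdeal ∣ v.asIdeal := (mul_dvd_mul_iff_right hw0).mp h2'
    have hle : v.asIdeal ≤ w.asIdeal := Ideal.le_of_dvd hdvd'
    exact hne (HeightOneSpectrum.ext (v.isMaximal.eq_of_le w.isPrime.ne_top hle))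
  simpa using aux_intVal_eq_ofAdd_neg w (p : 𝓞 F) hp0 1 h1 h2

lemma aux_mem (v w : HeightOneSpectrum (𝓞 F))
    (hsplit : Ideal.span {(p : 𝓞 F)} = v.asIdeal * w.asIdeal) :
    (p : 𝓞 F) ∈ w.asIdeal := by
  have h : Ideal.span {(p : 𝓞 F)} ≤ w.asIdeal := hsplit ▸ Ideal.mul_le_right
  exact h (Ideal.mem_span_singleton_self _)

lemma aux_intVal_coprime (hp : p.Prime) (w : HeightOneSpectrum (𝓞 F))
    (hpw : (p : 𝓞 F) ∈ w.asIdeal) (m : ℕ) (hm : ¬ p ∣ m) :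
    w.intValuation (m : 𝓞 F) = 1 := by
  refine le_antisymm (w.intValuation_le_one _) ?_
  by_contra hlt
  rw [not_le] at hlt
  have hlt' : w.intValuation (m : 𝓞 F) < 1 := hlt
  rw [w.intValuation_lt_one_iff_dvd, Ideal.dvd_span_singleton] at hlt'
  have hcop : IsCoprime (p : ℤ) (m : ℤ) :=
    Int.isCoprime_iff_gcd_eq_one.mpr ((Nat.Prime.coprime_iff_not_dvd hp).mpr hm)
  obtain ⟨a, b, hab⟩ := hcop
  have h1 : (1 : 𝓞 F) ∈ w.asIdeal := by
    have := congrArg (fun z : ℤ => (z : 𝓞 F)) hab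
    push_cast at this
    rw [← this]
    exact add_mem (Ideal.mul_mem_left _ _ hpw) (Ideal.mul_mem_left _ _ hlt')
  exact w.isPrime.ne_top ((Ideal.eq_top_iff_one _).mpr h1)

lemma aux_intVal_nat (hp : p.Prime) (w : HeightOneSpectrum (𝓞 F))
    (hpw : (p : 𝓞 F) ∈ w.asIdeal)
    (hvp : w.intValuation (p : 𝓞 F) = ((ofAdd (-1 : ℤ) : Multiplicative ℤ) :
      WithZero (Multiplicative ℤ)))
    (m : ℕ) (hm : m ≠ 0) :
    w.intValuation (m : 𝓞 F) = ((ofAdd (-(padicValNat p m : ℤ)) : Multiplicative ℤ) :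
      WithZero (Multiplicative ℤ)) := by
  set k := m.factorization p with hk
  have hsplit : (m : 𝓞 F) = (p : 𝓞 F) ^ k * ((m / p ^ k : ℕ) : 𝓞 F) := by
    rw [← Nat.cast_pow, ← Nat.cast_mul, Nat.ordProj_mul_ordCompl_eq_self m p]
  have hcop : ¬ p ∣ m / p ^ k := Nat.not_dvd_ordCompl hp hm
  rw [hsplit, map_mul, map_pow, hvp, aux_intVal_coprime hp w hpw _ hcop, mul_one,
    ← WithZero.coe_pow, WithZero.coe_inj, ← ofAdd_nsmul]
  congr 1
  rw [hk, Nat.factorization_def m hp]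
  simp [nsmul_eq_mul]

lemma aux_intVal_int (hp : p.Prime) (w : HeightOneSpectrum (𝓞 F))
    (hpw : (p : 𝓞 F) ∈ w.asIdeal)
    (hvp : w.intValuation (p : 𝓞 F) = ((ofAdd (-1 : ℤ) : Multiplicative ℤ) :
      WithZero (Multiplicative ℤ)))
    (a : ℤ) (ha : a ≠ 0) :
    w.intValuation (a : 𝓞 F) = ((ofAdd (-(padicValInt p a : ℤ)) : Multiplicative ℤ) :
      WithZero (Multiplicative ℤ)) := by
  have habs : padicValInt p a = padicValNat p a.natAbs := rfl
  have hnat := aux_intVal_nat hp w hpw hvp a.natAbs (Int.natAbs_ne_zero.mpr ha)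
  have key : w.intValuation ((a : ℤ) : 𝓞 F) = w.intValuation ((a.natAbs : ℕ) : 𝓞 F) := by
    rcases Int.natAbs_eq a with h | h
    · conv_lhs => rw [h]
      rw [Int.cast_natCast]
    · conv_lhs => rw [h]
      rw [Int.cast_neg, Int.cast_natCast, Valuation.map_neg]
  rw [key, hnat]
  rfl

lemma aux_val_rat (hp : p.Prime) (w : HeightOneSpectrum (𝓞 F))
    (hpw : (p : 𝓞 F) ∈ w.asIdeal)
    (hvp : w.intValuation (p : 𝓞 F) = ((ofAdd (-1 : ℤ) : Multiplicative ℤ) :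
      WithZero (Multiplicative ℤ)))
    (q : ℚ) (hq : q ≠ 0) :
    w.valuation F (algebraMap ℚ F q) = ((ofAdd (-(padicValRat p q)) : Multiplicative ℤ) :
      WithZero (Multiplicative ℤ)) := by
  have hnum : q.num ≠ 0 := Rat.num_ne_zero.mpr hq
  have hden : q.den ≠ 0 := q.den_nz
  have hcast : algebraMap ℚ F q =
      algebraMap (𝓞 F) F ((q.num : 𝓞 F)) / algebraMap (𝓞 F) F ((q.den : 𝓞 F)) := by
    rw [map_intCast, map_natCast, eq_ratCast (algebraMap ℚ F) q, Rat.cast_def]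
  rw [hcast, map_div₀, w.valuation_of_algebraMap, w.valuation_of_algebraMap,
    aux_intVal_int hp w hpw hvp q.num hnum]
  rw [aux_intVal_nat hp w hpw hvp q.den hden,
    ← WithZero.coe_div, WithZero.coe_inj, ← ofAdd_sub, padicValRat_def]
  congr 1
  ring

lemma aux_quad_identity (F : Type*) [Field F] [NumberField F]
    (hdeg : Module.finrank ℚ F = 2) (l : F) :
    ∃ n : ℚ, l * (algebraMap ℚ F (Algebra.trace ℚ F l) - l) = algebraMap ℚ F n := by
  have b : Module.Basis (Fin 2) ℚ F := Module.finBasisOfFinrankEq ℚ F hdeg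
  set M := Algebra.leftMulMatrix b l with hM
  have haeval : Polynomial.aeval l M.charpoly = 0 := by
    apply Algebra.leftMulMatrix_injective b
    rw [map_zero, ← Polynomial.aeval_algHom_apply, Matrix.aeval_self_charpoly]
  have hdeg2 : M.charpoly.natDegree = 2 := by
    rw [Matrix.charpoly_natDegree_eq_dim, Fintype.card_fin]
  have hmonic : M.charpoly.Monic := Matrix.charpoly_monic M
  have hlead : M.charpoly.coeff 2 = 1 := by
    have := hmonic.leadingCoeff
    rwa [Polynomial.leadingCoeff, hdeg2] at this
  have htr : Algebra.trace ℚ F l = -M.charpoly.coeff 1 := by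
    rw [Algebra.trace_eq_matrix_trace b, Matrix.trace_eq_neg_charpoly_coeff, Fintype.card_fin]
  have hexp := Polynomial.aeval_eq_sum_range (R := ℚ) (x := l) (p := M.charpoly)
  rw [hdeg2, haeval] at hexp
  rw [Finset.sum_range_succ, Finset.sum_range_succ, Finset.sum_range_one, hlead, one_smul] at hexp
  have h0 : algebraMap ℚ F (M.charpoly.coeff 0) + algebraMap ℚ F (M.charpoly.coeff 1) * l
      + l ^ 2 = 0 := by
    have h := hexp.symm
    simp only [pow_zero, pow_one, Algebra.smul_def, mul_one] at h
    exact h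
  refine ⟨M.charpoly.coeff 0, ?_⟩
  rw [htr, map_neg]
  linear_combination -h0

end NF

/-- Let `F` be a real quadratic field, `p` a rational prime split in `F` as
`pO_F = 𝔭₁𝔭₂`, and `λ` a totally positive element of the inverse different `𝔡⁻¹` with
`v_{𝔭₁}(λ) ≥ x` and `v_{𝔭₂}(λ) = y`, where `x > y ≥ 0`.  Then `v_p(Tr_{F/ℚ}(λ)) = y`.
(The valuation normalisation of Mathlib sends a uniformiser at `𝔭` to `ofAdd (-1)`, so
`v_𝔭(λ) ≥ x` reads `valuation λ ≤ ofAdd (-x)`.) -/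
theorem padic_val_trace_of_depleted (F : Type*) [Field F] [NumberField F]
    (hdeg : Module.finrank ℚ F = 2)
    (hreal : ∀ φ : F →+* ℂ, ComplexEmbedding.IsReal φ)
    (p : ℕ) (hp : p.Prime)
    (𝔭₁ 𝔭₂ : HeightOneSpectrum (𝓞 F)) (hne : 𝔭₁ ≠ 𝔭₂)
    (hsplit : Ideal.span {(p : 𝓞 F)} = 𝔭₁.asIdeal * 𝔭₂.asIdeal)
    (x y : ℕ) (hxy : y < x) (l : F)
    (hl : l ∈ ((differentIdeal ℤ (𝓞 F) :
        FractionalIdeal (nonZeroDivisors (𝓞 F)) F))⁻¹)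
    (hpos : ∀ ψ : F →+* ℝ, 0 < ψ l)
    (hv1 : 𝔭₁.valuation F l ≤
      ((Multiplicative.ofAdd (-(x : ℤ)) : Multiplicative ℤ) : WithZero (Multiplicative ℤ)))
    (hv2 : 𝔭₂.valuation F l =
      ((Multiplicative.ofAdd (-(y : ℤ)) : Multiplicative ℤ) : WithZero (Multiplicative ℤ))) :
    padicValRat p (Algebra.trace ℚ F l) = y := by
  classical
  set t : ℚ := Algebra.trace ℚ F l with ht
  obtain ⟨n, hid⟩ := aux_quad_identity F hdeg l
  rw [← ht] at hid
  set τ : F := algebraMap ℚ F t with hτ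
  set m : F := τ - l with hmdef
  have hl0 : l ≠ 0 := by
    intro h
    rw [h, map_zero] at hv2
    exact WithZero.zero_ne_coe hv2
  -- the two primes lie over p with ramification index 1
  have hpm1 : (p : 𝓞 F) ∈ 𝔭₁.asIdeal := aux_mem 𝔭₂ 𝔭₁ (hsplit.trans (mul_comm _ _))
  have hpm2 : (p : 𝓞 F) ∈ 𝔭₂.asIdeal := aux_mem 𝔭₁ 𝔭₂ hsplit
  have hvp1 : 𝔭₁.intValuation (p : 𝓞 F) = ((ofAdd (-1 : ℤ) : Multiplicative ℤ) :
      WithZero (Multiplicative ℤ)) :=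
    aux_intVal_p hp 𝔭₂ 𝔭₁ hne.symm (hsplit.trans (mul_comm _ _))
  have hvp2 : 𝔭₂.intValuation (p : 𝓞 F) = ((ofAdd (-1 : ℤ) : Multiplicative ℤ) :
      WithZero (Multiplicative ℤ)) := aux_intVal_p hp 𝔭₁ 𝔭₂ hne hsplit
  have hval1 := aux_val_rat hp 𝔭₁ hpm1 hvp1
  have hval2 := aux_val_rat hp 𝔭₂ hpm2 hvp2
  -- m ≠ 0
  have hm0 : m ≠ 0 := by
    intro h
    have hlt : l = τ := by
      have := sub_eq_zero.mp (hmdef ▸ h)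
      exact this.symm
    have ht0 : t ≠ 0 := by
      intro h'
      rw [h', map_zero] at hτ
      exact hl0 (hlt.trans hτ)
    have e1 := hval1 t ht0
    have e2 := hval2 t ht0
    rw [← hτ, ← hlt] at e1 e2
    rw [hv2] at e2
    rw [e1] at hv1
    rw [WithZero.coe_le_coe, Multiplicative.ofAdd_le] at hv1
    rw [WithZero.coe_inj, EmbeddingLike.apply_eq_iff_eq] at e2
    omega
  have hn0 : n ≠ 0 := by
    intro h
    rw [h, map_zero] at hid
    exact mul_ne_zero hl0 hm0 hid
  set N : ℤ := padicValRat p n with hN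
  -- valuation of the product l * m at both primes
  have hprod1 : 𝔭₁.valuation F l * 𝔭₁.valuation F m = ((ofAdd (-N) : Multiplicative ℤ) :
      WithZero (Multiplicative ℤ)) := by
    rw [← Valuation.map_mul, hid]; exact hval1 n hn0
  have hprod2 : 𝔭₂.valuation F l * 𝔭₂.valuation F m = ((ofAdd (-N) : Multiplicative ℤ) :
      WithZero (Multiplicative ℤ)) := by
    rw [← Valuation.map_mul, hid]; exact hval2 n hn0
  -- extract the exponent at 𝔭₁
  have hvl1ne : 𝔭₁.valuation F l ≠ 0 := (Valuation.ne_zero_iff _).mpr hl0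
  obtain ⟨α, hα⟩ : ∃ α : ℤ, 𝔭₁.valuation F l = ((ofAdd α : Multiplicative ℤ) :
      WithZero (Multiplicative ℤ)) :=
    ⟨Multiplicative.toAdd (WithZero.unzero hvl1ne), by
      rw [ofAdd_toAdd, WithZero.coe_unzero]⟩
  have hαx : α ≤ -(x : ℤ) := by
    rw [hα, WithZero.coe_le_coe, Multiplicative.ofAdd_le] at hv1
    exact hv1
  have hvm1 : 𝔭₁.valuation F m = ((ofAdd (-N - α) : Multiplicative ℤ) :
      WithZero (Multiplicative ℤ)) := by
    apply mul_left_cancel₀ (show ((ofAdd α : Multiplicative ℤ) :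
      WithZero (Multiplicative ℤ)) ≠ 0 from WithZero.coe_ne_zero)
    rw [← hα, hprod1, hα, ← WithZero.coe_mul, ← ofAdd_add]
    congr 2
    ring
  have hvm2 : 𝔭₂.valuation F m = ((ofAdd (-N + (y : ℤ)) : Multiplicative ℤ) :
      WithZero (Multiplicative ℤ)) := by
    apply mul_left_cancel₀ (show ((ofAdd (-(y : ℤ)) : Multiplicative ℤ) :
      WithZero (Multiplicative ℤ)) ≠ 0 from WithZero.coe_ne_zero)
    rw [← hv2, hprod2, hv2, ← WithZero.coe_mul, ← ofAdd_add]
    congr 2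
    ring
  -- trace is nonzero
  have ht0 : t ≠ 0 := by
    intro h'
    rw [h', map_zero] at hτ
    apply hm0
    rw [hmdef, hτ]
    rw [sub_eq_zero]
    -- τ = 0 so m = -l; but then 0 - l = m ≠ 0 unless... derive contradiction via valuations
    exfalso
    have hm' : m = -l := by rw [hmdef, hτ, zero_sub]
    have h1 := hprod1
    have h2 := hprod2
    rw [hm', Valuation.map_neg] at h1 h2
    rw [hv2] at h2
    rw [hα] at h1
    rw [← WithZero.coe_mul, ← ofAdd_add, WithZero.coe_inj,
      EmbeddingLike.apply_eq_iff_eq] at h1 h2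
    omega
  have hτ1 : 𝔭₁.valuation F τ = ((ofAdd (-padicValRat p t) : Multiplicative ℤ) :
      WithZero (Multiplicative ℤ)) := hval1 t ht0
  have hτ2 : 𝔭₂.valuation F τ = ((ofAdd (-padicValRat p t) : Multiplicative ℤ) :
      WithZero (Multiplicative ℤ)) := hval2 t ht0
  have hlm : l + m = τ := by rw [hmdef]; ring
  by_cases hcase : 2 * (y : ℤ) < N
  · -- v₂ m < v₂ l, so v₂ τ = v₂ l
    have hdist : 𝔭₂.valuation F l ≠ 𝔭₂.valuation F m := by
      rw [hv2, hvm2, Ne, WithZero.coe_inj, EmbeddingLike.apply_eq_iff_eq]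
      omega
    have hmax := Valuation.map_add_of_distinct_val (𝔭₂.valuation F) hdist
    rw [hlm, hτ2, hv2, hvm2] at hmax
    have hlt : ((ofAdd (-N + (y : ℤ)) : Multiplicative ℤ) : WithZero (Multiplicative ℤ)) ≤
        ((ofAdd (-(y : ℤ)) : Multiplicative ℤ) : WithZero (Multiplicative ℤ)) := by
      rw [WithZero.coe_le_coe, Multiplicative.ofAdd_le]
      omega
    rw [max_eq_left hlt, WithZero.coe_inj, EmbeddingLike.apply_eq_iff_eq] at hmax
    omega
  · exfalso
    push_neg at hcase
    -- at 𝔭₁ : v₁ l = α < -N - α = v₁ m impossible? compute v₁ τ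
    have hdist : 𝔭₁.valuation F l ≠ 𝔭₁.valuation F m := by
      rw [hα, hvm1, Ne, WithZero.coe_inj, EmbeddingLike.apply_eq_iff_eq]
      omega
    have hmax := Valuation.map_add_of_distinct_val (𝔭₁.valuation F) hdist
    rw [hlm, hτ1, hα, hvm1] at hmax
    have hlt : ((ofAdd α : Multiplicative ℤ) : WithZero (Multiplicative ℤ)) ≤
        ((ofAdd (-N - α) : Multiplicative ℤ) : WithZero (Multiplicative ℤ)) := by
      rw [WithZero.coe_le_coe, Multiplicative.ofAdd_le]
      omega
    rw [max_eq_right hlt, WithZero.coe_inj, EmbeddingLike.apply_eq_iff_eq] at hmax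
    -- now bound v₂ τ
    have hle := Valuation.map_add (𝔭₂.valuation F) l m
    rw [hlm, hτ2, hv2, hvm2] at hle
    rcases le_max_iff.mp hle with h | h <;>
      rw [WithZero.coe_le_coe, Multiplicative.ofAdd_le] at h <;>
      omega
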